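/- Let A₁, A₂ be n×n real 0-1 matrices with A₁ + A₂ = J. Then x·A₁ + y·A₂ is normal for all real x, y if and only if A₁ is normal. -/

import Mathlib

open Matrix

theorem stmt3 (n : ℕ) (A₁ A₂ : Matrix (Fin n) (Fin n) ℝ)
    (h01₁ : ∀ a b, A₁ a b = 0 ∨ A₁ a b = 1)
    (h01₂ : ∀ a b, A₂ a b = 0 ∨ A₂ a b = 1)
    (hsum : A₁ + A₂ = fun _ _ => (1 : ℝ)) :
    (∀ x y : ℝ,
        (x • A₁ + y • A₂) * (x • A₁ + y • A₂)ᵀ = (x • A₁ + y • A₂)ᵀ * (x • A₁ + y • A₂)) ↔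
      A₁ * A₁ᵀ = A₁ᵀ * A₁ := by
  constructor
  · intro h
    simpa using h 1 0
  · intro hA x y
    set J : Matrix (Fin n) (Fin n) ℝ := fun _ _ => (1 : ℝ) with hJdef
    have hA₂ : A₂ = J - A₁ := by
      rw [eq_sub_iff_add_eq, add_comm]; exact hsum
    have hJT : Jᵀ = J := by ext i j; rfl
    have hS : ∀ i, ∑ k, A₁ i k = ∑ k, A₁ k i := by
      intro i
      have h1 : (A₁ * A₁ᵀ) i i = (A₁ᵀ * A₁) i i := by rw [hA]
      simp only [mul_apply, transpose_apply] at h1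
      calc ∑ k, A₁ i k = ∑ k, A₁ i k * A₁ i k := by
            refine Finset.sum_congr rfl fun k _ => ?_
            rcases h01₁ i k with h | h <;> rw [h] <;> ring
        _ = ∑ k, A₁ k i * A₁ k i := h1
        _ = ∑ k, A₁ k i := by
            refine Finset.sum_congr rfl fun k _ => ?_
            rcases h01₁ k i with h | h <;> rw [h] <;> ring
    have hkey : A₁ * J + J * A₁ᵀ = A₁ᵀ * J + J * A₁ := by
      ext i j
      simp only [Matrix.add_apply, mul_apply, transpose_apply]
      simp only [hJdef, one_mul, mul_one]
      rw [hS i, hS j]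
    have hM : x • A₁ + y • A₂ = y • J + (x - y) • A₁ := by
      rw [hA₂]; module
    rw [hM, transpose_add, transpose_smul, transpose_smul, hJT]
    simp only [add_mul, mul_add, Matrix.smul_mul, Matrix.mul_smul, smul_smul, smul_add]
    rw [hA]
    have hkey' : ((x - y) * y) • (A₁ * J) + ((x - y) * y) • (J * A₁ᵀ) =
        ((x - y) * y) • (A₁ᵀ * J) + ((x - y) * y) • (J * A₁) := by
      rw [← smul_add, ← smul_add, hkey]
    rw [mul_comm y (x - y)]
    linear_combination (norm := abel) hkey'
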